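/- For every symmetric polynomial f in r variables over ℂ, the evaluation f(L_1, ..., L_r) at the Jucys-Murphy elements lies in the center of the group algebra ℂ[S_r]. -/

import Mathlib

/-- The Jucys-Murphy element `L_k = ∑_{j<k} (j,k)` of the group algebra `ℂ[S_r]`. -/
noncomputable def JM (r : ℕ) (k : Fin r) : MonoidAlgebra ℂ (Equiv.Perm (Fin r)) :=
  ∑ j ∈ Finset.univ.filter (fun j => j < k),
    MonoidAlgebra.of ℂ (Equiv.Perm (Fin r)) (Equiv.swap j k)

/-- Evaluation of a polynomial in `r` variables at the Jucys-Murphy elements, monomial by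
monomial, with the factors of each monomial multiplied in the order `L_1, L_2, …, L_r`
(the `L_j` pairwise commute, so this is the natural evaluation). -/
noncomputable def evalJM (r : ℕ) (f : MvPolynomial (Fin r) ℂ) :
    MonoidAlgebra ℂ (Equiv.Perm (Fin r)) :=
  ∑ m ∈ f.support, f.coeff m • (List.ofFn fun j : Fin r => JM r j ^ m j).prod


namespace JMAux

variable {r : ℕ}

noncomputable abbrev og (σ : Equiv.Perm (Fin r)) : MonoidAlgebra ℂ (Equiv.Perm (Fin r)) :=
  MonoidAlgebra.of ℂ (Equiv.Perm (Fin r)) σ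

lemma conj_JM (σ : Equiv.Perm (Fin r)) (k : Fin r) (hk : σ k = k)
    (h : ∀ x : Fin r, x < k ↔ σ x < k) :
    og σ * JM r k = JM r k * og σ := by
  unfold JM
  rw [Finset.mul_sum, Finset.sum_mul]
  refine Finset.sum_nbij' (i := fun j => σ j) (j := fun j => σ⁻¹ j) ?_ ?_ ?_ ?_ ?_
  · intro a ha
    simp only [Finset.mem_filter, Finset.mem_univ, true_and] at ha ⊢
    exact (h a).mp ha
  · intro a ha
    simp only [Finset.mem_filter, Finset.mem_univ, true_and] at ha ⊢
    have := (h (σ⁻¹ a)).mpr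
    simp only [Equiv.Perm.inv_def, Equiv.apply_symm_apply] at this
    exact this ha
  · intro a _; simp
  · intro a _; simp
  · intro a _
    rw [← map_mul, ← map_mul]
    congr 1
    have : Equiv.swap (σ a) (σ k) = σ * Equiv.swap a k * σ⁻¹ := Equiv.swap_apply_apply σ a k
    rw [hk] at this
    rw [this]
    group

end JMAux

namespace JMAux

variable {r : ℕ}

lemma JM_comm_lt {j k : Fin r} (hjk : j < k) : JM r j * JM r k = JM r k * JM r j := by
  rw [JM, Finset.sum_mul, Finset.mul_sum]
  refine Finset.sum_congr rfl fun a ha => ?_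
  simp only [Finset.mem_filter, Finset.mem_univ, true_and] at ha
  have hak : a < k := lt_trans ha hjk
  refine conj_JM (Equiv.swap a j) k ?_ ?_
  · exact Equiv.swap_apply_of_ne_of_ne (ne_of_gt hak) (ne_of_gt hjk)
  · intro x
    rcases eq_or_ne x a with rfl | hxa
    · simp only [Equiv.swap_apply_left]
      exact ⟨fun _ => hjk, fun _ => hak⟩
    rcases eq_or_ne x j with rfl | hxj
    · simp only [Equiv.swap_apply_right]
      exact ⟨fun _ => hak, fun _ => hjk⟩
    · rw [Equiv.swap_apply_of_ne_of_ne hxa hxj]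

lemma JM_comm (j k : Fin r) : Commute (JM r j) (JM r k) := by
  rcases lt_trichotomy j k with h | rfl | h
  · exact JM_comm_lt h
  · rfl
  · exact (JM_comm_lt h).symm

section Rel

variable (i i' : Fin r) (hii : (i' : ℕ) = (i : ℕ) + 1)

lemma filter_lt_succ (hii : (i' : ℕ) = (i : ℕ) + 1) :
    Finset.univ.filter (fun j : Fin r => j < i') =
      insert i (Finset.univ.filter (fun j : Fin r => j < i)) := by
  ext j
  simp only [Finset.mem_filter, Finset.mem_univ, true_and, Finset.mem_insert, Fin.lt_def,
    Fin.ext_iff, hii]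
  omega

lemma i_not_mem : i ∉ Finset.univ.filter (fun j : Fin r => j < i) := by
  simp

lemma swap_mul_swap_lt {j : Fin r} (hj : j < i) (hii : (i' : ℕ) = (i : ℕ) + 1) :
    Equiv.swap i i' * Equiv.swap j i = Equiv.swap j i' * Equiv.swap i i' := by
  have hji : j ≠ i := ne_of_lt hj
  have hji' : j ≠ i' := by
    rw [Fin.ne_iff_vne] at hji ⊢
    omega
  have : Equiv.swap ((Equiv.swap i i') j) ((Equiv.swap i i') i) =
      Equiv.swap i i' * Equiv.swap j i * (Equiv.swap i i')⁻¹ :=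
    Equiv.swap_apply_apply _ j i
  rw [Equiv.swap_apply_of_ne_of_ne hji hji', Equiv.swap_apply_left] at this
  rw [this]
  group

lemma rel1 (hii : (i' : ℕ) = (i : ℕ) + 1) :
    og (Equiv.swap i i') * JM r i = JM r i' * og (Equiv.swap i i') - 1 := by
  have hsum : JM r i' = og (Equiv.swap i i') +
      ∑ j ∈ Finset.univ.filter (fun j : Fin r => j < i),
        MonoidAlgebra.of ℂ (Equiv.Perm (Fin r)) (Equiv.swap j i') := by
    rw [JM, filter_lt_succ i i' hii, Finset.sum_insert (i_not_mem i)]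
  have key : og (Equiv.swap i i') * JM r i =
      (∑ j ∈ Finset.univ.filter (fun j : Fin r => j < i),
        MonoidAlgebra.of ℂ (Equiv.Perm (Fin r)) (Equiv.swap j i')) * og (Equiv.swap i i') := by
    rw [JM, Finset.mul_sum, Finset.sum_mul]
    refine Finset.sum_congr rfl fun j hj => ?_
    simp only [Finset.mem_filter, Finset.mem_univ, true_and] at hj
    rw [← map_mul, ← map_mul, swap_mul_swap_lt i i' hj hii]
  have hswap2 : og (Equiv.swap i i') * og (Equiv.swap i i') = 1 := by
    rw [← map_mul, Equiv.swap_mul_self, map_one]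
  rw [key, hsum, add_mul, hswap2]
  exact (add_sub_cancel_left 1 _).symm

lemma rel2 (hii : (i' : ℕ) = (i : ℕ) + 1) :
    og (Equiv.swap i i') * JM r i' = JM r i * og (Equiv.swap i i') + 1 := by
  have h1 := rel1 i i' hii
  have hswap2 : og (Equiv.swap i i') * og (Equiv.swap i i') = 1 := by
    rw [← map_mul, Equiv.swap_mul_self, map_one]
  have h2 : JM r i = og (Equiv.swap i i') * JM r i' * og (Equiv.swap i i') - og (Equiv.swap i i') := by
    calc JM r i = og (Equiv.swap i i') * (og (Equiv.swap i i') * JM r i) := by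
          rw [← mul_assoc, hswap2, one_mul]
      _ = og (Equiv.swap i i') * (JM r i' * og (Equiv.swap i i') - 1) := by rw [h1]
      _ = og (Equiv.swap i i') * JM r i' * og (Equiv.swap i i') - og (Equiv.swap i i') := by
          noncomm_ring
  calc og (Equiv.swap i i') * JM r i'
      = og (Equiv.swap i i') * JM r i' * og (Equiv.swap i i') * og (Equiv.swap i i') := by
        rw [mul_assoc, hswap2, mul_one]
    _ = (JM r i + og (Equiv.swap i i')) * og (Equiv.swap i i') := by
        rw [h2]; noncomm_ring
    _ = JM r i * og (Equiv.swap i i') + 1 := by rw [add_mul, hswap2]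

lemma rel3 {j : Fin r} (hji : j ≠ i) (hji' : j ≠ i') (hii : (i' : ℕ) = (i : ℕ) + 1) :
    og (Equiv.swap i i') * JM r j = JM r j * og (Equiv.swap i i') := by
  refine conj_JM _ j (Equiv.swap_apply_of_ne_of_ne hji hji') ?_
  intro x
  rcases eq_or_ne x i with rfl | hxi
  · rw [Equiv.swap_apply_left, Fin.lt_def, Fin.lt_def, hii]
    rw [Fin.ne_iff_vne] at hji hji'
    omega
  rcases eq_or_ne x i' with rfl | hxi'
  · rw [Equiv.swap_apply_right, Fin.lt_def, Fin.lt_def, hii]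
    rw [Fin.ne_iff_vne] at hji hji'
    omega
  · rw [Equiv.swap_apply_of_ne_of_ne hxi hxi']

end Rel

end JMAux

namespace JMAux

open MvPolynomial

variable {r : ℕ}

noncomputable def Bsub (r : ℕ) : Subalgebra ℂ (MonoidAlgebra ℂ (Equiv.Perm (Fin r))) :=
  Algebra.adjoin ℂ (Set.range (JM r))

noncomputable instance (r : ℕ) : CommRing (Bsub r) :=
  { (Bsub r).toRing, Algebra.adjoinCommRingOfComm ℂ (by
    rintro a ⟨j, rfl⟩ b ⟨k, rfl⟩
    exact JM_comm j k) with }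

noncomputable def xB (r : ℕ) : Fin r → Bsub r :=
  fun j => ⟨JM r j, Algebra.subset_adjoin ⟨j, rfl⟩⟩

noncomputable def Eh (r : ℕ) : MvPolynomial (Fin r) ℂ →ₐ[ℂ] MonoidAlgebra ℂ (Equiv.Perm (Fin r)) :=
  ((Bsub r).val).comp (MvPolynomial.aeval (xB r))

lemma Eh_X (j : Fin r) : Eh r (X j) = JM r j := by
  simp [Eh, xB]

lemma evalJM_eq (f : MvPolynomial (Fin r) ℂ) : evalJM r f = Eh r f := by
  conv_rhs => rw [f.as_sum]
  rw [map_sum, evalJM]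
  refine Finset.sum_congr rfl fun m _ => ?_
  rw [Eh, AlgHom.comp_apply, aeval_monomial]
  have hprod : (Finsupp.prod m fun i k => xB r i ^ k) = ∏ j : Fin r, xB r j ^ m j :=
    Finsupp.prod_pow m (xB r)
  rw [map_mul, hprod]
  have hlist : (∏ j : Fin r, xB r j ^ m j) = (List.ofFn fun j : Fin r => xB r j ^ m j).prod :=
    (List.prod_ofFn).symm
  rw [hlist, map_list_prod]
  have : (List.ofFn fun j : Fin r => xB r j ^ m j).map (Bsub r).val
      = List.ofFn fun j : Fin r => JM r j ^ m j := by
    rw [List.map_ofFn]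
    congr 1
  rw [this]
  rw [AlgHom.commutes]
  rw [Algebra.smul_def]

end JMAux

namespace JMAux

open MvPolynomial

variable {r : ℕ}

lemma key (i i' : Fin r) (hii : (i' : ℕ) = (i : ℕ) + 1) (f : MvPolynomial (Fin r) ℂ) :
    ∃ g : MvPolynomial (Fin r) ℂ,
      f - rename (Equiv.swap i i') f = (X i' - X i) * g ∧
      og (Equiv.swap i i') * Eh r f =
        Eh r (rename (Equiv.swap i i') f) * og (Equiv.swap i i') + Eh r g := by
  induction f using MvPolynomial.induction_on with
  | C a =>
    refine ⟨0, by simp, ?_⟩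
    rw [rename_C, map_zero, add_zero]
    have : Eh r (C a) = algebraMap ℂ _ a := by
      rw [show (C a : MvPolynomial (Fin r) ℂ) = algebraMap ℂ _ a from rfl, AlgHom.commutes]
    rw [this, Algebra.commutes]
  | add p q hp hq =>
    obtain ⟨g1, hd1, hc1⟩ := hp
    obtain ⟨g2, hd2, hc2⟩ := hq
    refine ⟨g1 + g2, by rw [map_add]; linear_combination hd1 + hd2, ?_⟩
    rw [map_add, map_add, map_add, map_add, mul_add, add_mul, hc1, hc2]
    abel
  | mul_X p j hp =>
    obtain ⟨g, hd, hc⟩ := hp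
    rcases eq_or_ne j i with rfl | hji
    · -- j = i
      refine ⟨g * X j - rename (Equiv.swap j i') p, ?_, ?_⟩
      · rw [map_mul, rename_X, Equiv.swap_apply_left]
        linear_combination (X j : MvPolynomial (Fin r) ℂ) * hd
      · simp only [map_mul, map_sub, rename_X, Equiv.swap_apply_left, Eh_X]
        rw [← mul_assoc, hc, add_mul, mul_assoc (Eh r ((rename (Equiv.swap j i')) p)) _ (JM r j),
          rel1 j i' hii]
        noncomm_ring
    rcases eq_or_ne j i' with rfl | hji'
    · -- j = i'
      refine ⟨g * X j + rename (Equiv.swap i j) p, ?_, ?_⟩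
      · rw [map_mul, rename_X, Equiv.swap_apply_right]
        linear_combination (X j : MvPolynomial (Fin r) ℂ) * hd
      · simp only [map_mul, map_add, rename_X, Equiv.swap_apply_right, Eh_X]
        rw [← mul_assoc, hc, add_mul, mul_assoc (Eh r ((rename (Equiv.swap i j)) p)) _ (JM r j),
          rel2 i j hii]
        noncomm_ring
    · -- j ∉ {i, i'}
      refine ⟨g * X j, ?_, ?_⟩
      · rw [map_mul, rename_X, Equiv.swap_apply_of_ne_of_ne hji hji']
        linear_combination (X j : MvPolynomial (Fin r) ℂ) * hd
      · simp only [map_mul, rename_X, Equiv.swap_apply_of_ne_of_ne hji hji', Eh_X]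
        rw [← mul_assoc, hc, add_mul, mul_assoc (Eh r ((rename (Equiv.swap i i')) p)) _ (JM r j),
          rel3 i i' hji hji' hii]
        noncomm_ring

end JMAux

namespace JMAux

open MvPolynomial

variable {r : ℕ}

lemma comm_adjacent (i i' : Fin r) (hii : (i' : ℕ) = (i : ℕ) + 1)
    (f : MvPolynomial (Fin r) ℂ) (hf : f.IsSymmetric) :
    og (Equiv.swap i i') * Eh r f = Eh r f * og (Equiv.swap i i') := by
  obtain ⟨g, hd, hc⟩ := key i i' hii f
  rw [hf (Equiv.swap i i')] at hd hc
  have hne : (X i' - X i : MvPolynomial (Fin r) ℂ) ≠ 0 := by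
    refine sub_ne_zero.mpr (fun h => ?_)
    have h2 : i' = i := X_injective h
    have h3 := congrArg Fin.val h2
    omega
  have hg : g = 0 := by
    have h0 : (X i' - X i : MvPolynomial (Fin r) ℂ) * g = 0 := by
      rw [← hd]; ring
    exact (mul_eq_zero.mp h0).resolve_left hne
  rw [hg, map_zero, add_zero] at hc
  exact hc

lemma comm_all (f : MvPolynomial (Fin r) ℂ) (hf : f.IsSymmetric)
    (σ : Equiv.Perm (Fin r)) :
    og σ * Eh r f = Eh r f * og σ := by
  cases r with
  | zero =>
    have : σ = 1 := by ext x; exact x.elim0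
    subst this
    simp only [og, map_one, one_mul, mul_one]
  | succ n =>
    have hσ : σ ∈ Submonoid.closure
        (Set.range fun i : Fin n => Equiv.swap i.castSucc i.succ) := by
      rw [Equiv.Perm.mclosure_swap_castSucc_succ]
      trivial
    induction hσ using Submonoid.closure_induction with
    | mem τ hτ =>
      obtain ⟨i, rfl⟩ := hτ
      exact comm_adjacent i.castSucc i.succ (by simp) f hf
    | one => simp only [og, map_one, one_mul, mul_one]
    | mul a b _ _ ha hb =>
      simp only [og, map_mul] at ha hb ⊢
      rw [mul_assoc, hb, ← mul_assoc, ha, mul_assoc]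

end JMAux


/-- For every symmetric polynomial `f` in `r` variables over `ℂ`, the evaluation
`f(L_1, …, L_r)` at the Jucys-Murphy elements lies in the center of `ℂ[S_r]`. -/
theorem symmetric_jucysMurphy_mem_center (r : ℕ) (f : MvPolynomial (Fin r) ℂ)
    (hf : f.IsSymmetric) :
    evalJM r f ∈ Subalgebra.center ℂ (MonoidAlgebra ℂ (Equiv.Perm (Fin r))) := by
  rw [JMAux.evalJM_eq]
  rw [Subalgebra.mem_center_iff]
  intro b
  induction b using MonoidAlgebra.induction_on with
  | of σ => exact JMAux.comm_all f hf σ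
  | add p q hp hq => rw [add_mul, mul_add, hp, hq]
  | smul c p hp => rw [smul_mul_assoc, mul_smul_comm, hp]
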